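/- For all coefficient sequences a, b, the ψ-derivative of the Ward product satisfies the symmetric ψ-Leibniz rule D(a·b) = (D a) ⋆_{1,0} b + a·(D b). -/

import Mathlib

open Finset

/-- The ψ-factorial: ψₙ! = ψ₁ψ₂⋯ψₙ, with ψ₀! = 1. -/
noncomputable def psiFact (ψ : ℕ → ℂ) : ℕ → ℂ
  | 0 => 1
  | n + 1 => psiFact ψ n * ψ (n + 1)

/-- The ψ-binomial coefficient binomψ(n,k) = ψₙ!/(ψₖ!·ψ_{n−k}!). -/
noncomputable def psiBinom (ψ : ℕ → ℂ) (n k : ℕ) : ℂ :=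
  psiFact ψ n / (psiFact ψ k * psiFact ψ (n - k))

/-- The Fontané numbers F(n,k) = (ψₙ − ψₖ)/ψ_{n−k}. -/
noncomputable def Fker (ψ : ℕ → ℂ) (n k : ℕ) : ℂ :=
  (ψ n - ψ k) / ψ (n - k)

/-- The Ward product of coefficient sequences. -/
noncomputable def wardMul (ψ : ℕ → ℂ) (a b : ℕ → ℂ) (n : ℕ) : ℂ :=
  ∑ k ∈ Finset.range (n + 1), psiBinom ψ n k * a k * b (n - k)

/-- The opposite Fontané product ⋆_{i,j} of coefficient sequences. -/
noncomputable def oppFontane (ψ : ℕ → ℂ) (i j : ℕ) (a b : ℕ → ℂ) (n : ℕ) : ℂ :=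
  ∑ k ∈ Finset.range (n + 1), Fker ψ (n + i) (n - k + j) * psiBinom ψ n k * a k * b (n - k)

/-- The ψ-derivative on coefficient sequences: the shift (D a)ₙ = a_{n+1}. -/
def Dpsi (a : ℕ → ℂ) (n : ℕ) : ℂ := a (n + 1)

lemma psiFact_ne_zero (ψ : ℕ → ℂ) (hψ : ∀ n : ℕ, 1 ≤ n → ψ n ≠ 0) :
    ∀ m, psiFact ψ m ≠ 0 := by
  intro m
  induction m with
  | zero => simp [psiFact]
  | succ k ih => exact mul_ne_zero ih (hψ _ (by omega))

lemma auxx (A K D x y z : ℂ) (hK : K ≠ 0) (hD : D ≠ 0) (hy : y ≠ 0) (hz : z ≠ 0) :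
    A * x / (K * y * (D * z)) = (x - z) / y * (A / (K * (D * z))) + A / (K * y * D) := by
  have h1 : y * (K * (D * z)) ≠ 0 := by simp [hy, hK, hD, hz]
  have h2 : K * y * D ≠ 0 := by simp [hy, hK, hD]
  have h3 : K * y * (D * z) ≠ 0 := by simp [hy, hK, hD, hz]
  rw [div_mul_div_comm, div_add_div _ _ h1 h2, div_eq_div_iff h3 (mul_ne_zero h1 h2)]
  ring

lemma psiPascal (ψ : ℕ → ℂ) (hψ : ∀ n : ℕ, 1 ≤ n → ψ n ≠ 0) (n k : ℕ) (hk : k < n) :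
    psiBinom ψ (n + 1) (k + 1)
      = Fker ψ (n + 1) (n - k) * psiBinom ψ n k + psiBinom ψ n (k + 1) := by
  have hf := psiFact_ne_zero ψ hψ
  obtain ⟨d, hd⟩ : ∃ d, n - k = d + 1 := ⟨n - k - 1, by omega⟩
  have h1 : n + 1 - (k + 1) = d + 1 := by omega
  have h2 : n + 1 - (n - k) = k + 1 := by omega
  have h3 : n - (k + 1) = d := by omega
  have h4 : n + 1 - (d + 1) = k + 1 := by omega
  simp only [psiBinom, Fker, h1, h2, h3, hd, h4, psiFact]
  exact auxx _ _ _ _ _ _ (hf k) (hf d) (hψ _ (by omega)) (hψ _ (by omega))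

/-- The symmetric ψ-Leibniz rule: D(a·b) = (D a) ⋆_{1,0} b + a·(D b). -/
theorem Dpsi_wardMul_symm (ψ : ℕ → ℂ) (hψ0 : ψ 0 = 0) (hψ1 : ψ 1 = 1) (hψ : ∀ n : ℕ, 1 ≤ n → ψ n ≠ 0)
    (a b : ℕ → ℂ) (n : ℕ) :
    Dpsi (wardMul ψ a b) n
      = oppFontane ψ 1 0 (Dpsi a) b n + wardMul ψ a (Dpsi b) n := by
  have hf := psiFact_ne_zero ψ hψ
  have hbin0 : ∀ m, psiBinom ψ m 0 = 1 := by
    intro m; simp [psiBinom, psiFact, div_self (hf m)]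
  have hbinn : ∀ m, psiBinom ψ m m = 1 := by
    intro m; simp [psiBinom, psiFact, div_self (hf m)]
  have hFk0 : Fker ψ (n + 1) 0 = 1 := by
    simp [Fker, hψ0, div_self (hψ (n + 1) (by omega))]
  have hL : Dpsi (wardMul ψ a b) n
      = (∑ k ∈ Finset.range (n + 1), psiBinom ψ (n + 1) (k + 1) * a (k + 1) * b (n - k))
        + a 0 * b (n + 1) := by
    simp only [Dpsi, wardMul]
    rw [Finset.sum_range_succ']
    congr 1
    · exact Finset.sum_congr rfl fun k _ => by rw [show n + 1 - (k + 1) = n - k from by omega]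
    · simp [hbin0]
  have hR : wardMul ψ a (Dpsi b) n
      = (∑ k ∈ Finset.range n, psiBinom ψ n (k + 1) * a (k + 1) * b (n - k))
        + a 0 * b (n + 1) := by
    simp only [Dpsi, wardMul]
    rw [Finset.sum_range_succ']
    congr 1
    · refine Finset.sum_congr rfl fun k hk => ?_
      have hkn := Finset.mem_range.mp hk
      rw [show n - (k + 1) + 1 = n - k from by omega]
    · simp [hbin0]
  have hO : oppFontane ψ 1 0 (Dpsi a) b n
      = (∑ k ∈ Finset.range n,
          Fker ψ (n + 1) (n - k) * psiBinom ψ n k * a (k + 1) * b (n - k))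
        + a (n + 1) * b 0 := by
    simp only [oppFontane, Dpsi, Nat.add_zero]
    rw [Finset.sum_range_succ]
    simp [hbinn, hFk0]
  rw [hL, hR, hO, Finset.sum_range_succ]
  have hlast : psiBinom ψ (n + 1) (n + 1) * a (n + 1) * b (n - n) = a (n + 1) * b 0 := by
    simp [hbinn]
  rw [hlast]
  have hmain : ∑ k ∈ Finset.range n, psiBinom ψ (n + 1) (k + 1) * a (k + 1) * b (n - k)
      = (∑ k ∈ Finset.range n,
          Fker ψ (n + 1) (n - k) * psiBinom ψ n k * a (k + 1) * b (n - k))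
        + ∑ k ∈ Finset.range n, psiBinom ψ n (k + 1) * a (k + 1) * b (n - k) := by
    rw [← Finset.sum_add_distrib]
    refine Finset.sum_congr rfl fun k hk => ?_
    rw [psiPascal ψ hψ n k (Finset.mem_range.mp hk)]
    ring
  rw [hmain]
  ring
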